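/- arXiv:0907.4640 — 4 statements merged into one kernel-verified Lean document; each statement's English description precedes it below -/
import Mathlib

section
/- Invariance of well-formedness under the natural semantics of λ_let: if the configuration ⟨Ψ⟩M is closed and X-good and the judgment ⟨Ψ⟩M ⇓_X ⟨Φ⟩V is derivable, then ⟨Φ⟩V is closed and X-good, the domain of Ψ is contained in the domain of Φ, and every judgment occurring in the derivation is promising (i.e., its configuration is closed and good with respect to its variable set). -/
/-! # The acyclic call-by-need calculus λ_let -/

inductive Expr : Type
  | var : ℕ → Expr
  | lam : ℕ → Expr → Expr
  | app : Expr → Expr → Expr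
  | letE : ℕ → Expr → Expr → Expr
  deriving DecidableEq

namespace Expr

/-- free variables -/
def FV : Expr → Finset ℕ
  | var x => {x}
  | lam x M => FV M \ {x}
  | app M N => FV M ∪ FV N
  | letE x M N => FV M ∪ (FV N \ {x})

/-- `subst M x x'` is `M[x'/x]`: rename free occurrences of `x` to `x'`. -/
def subst : Expr → ℕ → ℕ → Expr
  | var y, x, x' => if y = x then var x' else var y
  | lam y M, x, x' => if y = x then lam y M else lam y (subst M x x')
  | app M N, x, x' => app (subst M x x') (subst N x x')
  | letE y M N, x, x' => letE y (subst M x x') (if y = x then N else subst N x x')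

def IsValue : Expr → Prop
  | lam _ _ => True
  | _ => False

inductive IsAnswer : Expr → Prop
  | val (x M) : IsAnswer (lam x M)
  | letE (x M A) : IsAnswer A → IsAnswer (Expr.letE x M A)

/-- a program is a closed expression -/
def Closed (M : Expr) : Prop := FV M = ∅

end Expr

open Expr

/-- Evaluation contexts E ::= [] | E M | let x = M in E | let x = E in E'[x]. -/
inductive Ctx : Type
  | hole : Ctx
  | appL : Ctx → Expr → Ctx
  | letB : ℕ → Expr → Ctx → Ctx
  | letD : ℕ → Ctx → Ctx → Ctx
  deriving DecidableEq

namespace Ctx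

def plug : Ctx → Expr → Expr
  | hole, M => M
  | appL E N, M => .app (plug E M) N
  | letB x N E, M => .letE x N (plug E M)
  | letD x E E', M => .letE x (plug E M) (plug E' (.var x))

/-- let-bound variables of a context -/
def LBV : Ctx → Finset ℕ
  | hole => ∅
  | appL E _ => LBV E
  | letB x _ E => insert x (LBV E)
  | letD x E E' => insert x (LBV E ∪ LBV E')

/-- `comp C E` replaces the hole of `C` by `E`. -/
def comp : Ctx → Ctx → Ctx
  | hole, E => E
  | appL C N, E => appL (comp C E) N
  | letB x N C, E => letB x N (comp C E)
  | letD x C E', E => letD x (comp C E) E'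

end Ctx

/-- The notion of reduction of λ_let: β_need, lift, deref, assoc. -/
inductive Redex : Expr → Expr → Prop
  | beta (x M N) : Redex (.app (.lam x M) N) (.letE x N M)
  | lift (x M A N) : IsAnswer A →
      Redex (.app (.letE x M A) N) (.letE x M (.app A N))
  | deref (x V E) : IsValue V →
      Redex (.letE x V (Ctx.plug E (.var x))) (.letE x V (Ctx.plug E V))
  | assoc (x y M A E) : IsAnswer A →
      Redex (.letE x (.letE y M A) (Ctx.plug E (.var x)))
            (.letE y M (.letE x A (Ctx.plug E (.var x))))

/-- standard reduction -/
def Step (M N : Expr) : Prop :=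
  ∃ E M' N', Redex M' N' ∧ M = Ctx.plug E M' ∧ N = Ctx.plug E N'

def Steps : Expr → Expr → Prop := Relation.ReflTransGen Step

/-- `n`-step standard reduction -/
def StepN : ℕ → Expr → Expr → Prop
  | 0, M, N => M = N
  | n + 1, M, N => ∃ M', Step M M' ∧ StepN n M' N

/-! ## Heaps and the natural semantics -/

abbrev Heap := List (ℕ × Expr)

def heapDom (Ψ : Heap) : Finset ℕ := (Ψ.map Prod.fst).toFinset

def heapClosedFrom : Finset ℕ → Heap → Prop
  | _, [] => True
  | S, (x, M) :: rest => FV M ⊆ S ∧ heapClosedFrom (insert x S) rest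

/-- the configuration ⟨Ψ⟩M is closed -/
def ConfigClosed (Ψ : Heap) (M : Expr) : Prop :=
  heapClosedFrom ∅ Ψ ∧ FV M ⊆ heapDom Ψ

/-- the configuration with heap Ψ is X-good -/
def ConfigGood (Ψ : Heap) (X : Finset ℕ) : Prop :=
  (Ψ.map Prod.fst).Nodup ∧ Disjoint (heapDom Ψ) X

/-- The natural semantics ⟨Ψ⟩M ⇓_X ⟨Φ⟩V of λ_let. -/
inductive Eval : Heap → Expr → Finset ℕ → Heap → Expr → Prop
  | lam (Ψ x M X) : Eval Ψ (.lam x M) X Ψ (.lam x M)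
  | app {Ψ M₁ M₂ X Φ x N x' Ψ' V} :
      Eval Ψ M₁ X Φ (.lam x N) →
      x' ∉ heapDom Φ ∪ X ∪ FV M₂ ∪ FV N →
      Eval (Φ ++ [(x', M₂)]) (subst N x x') X Ψ' V →
      Eval Ψ (.app M₁ M₂) X Ψ' V
  | letE {Ψ x N M X x' Φ V} :
      x' ∉ heapDom Ψ ∪ X ∪ FV N ∪ FV M →
      Eval (Ψ ++ [(x', N)]) (subst M x x') X Φ V →
      Eval Ψ (.letE x N M) X Φ V
  | var {Ψ M X Φ Ψ' V x} :
      Eval Ψ M (X ∪ {x} ∪ heapDom Φ) Ψ' V →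
      Eval (Ψ ++ (x, M) :: Φ) (.var x) X (Ψ' ++ (x, V) :: Φ) V

/-! ## Structured heaps and the instrumented natural semantics -/

inductive Frame : Type
  | appF : Expr → Frame
  | letF : ℕ → Expr → Frame
  | demF : ℕ → Ctx → Frame

/-- A structured heap: a sequence of frames, the head being the innermost frame. -/
abbrev SHeap := List Frame

namespace Frame

def plug : Frame → Expr → Expr
  | appF N, M => .app M N
  | letF x N, M => .letE x N M
  | demF x E, M => .letE x M (Ctx.plug E (.var x))

def lbv : Frame → Finset ℕ
  | appF _ => ∅
  | letF x _ => {x}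
  | demF _ _ => ∅

def IsLet : Frame → Prop
  | letF _ _ => True
  | _ => False

def toCtx : Frame → Ctx
  | appF N => .appL .hole N
  | letF x N => .letB x N .hole
  | demF x E => .letD x .hole E

end Frame

def slbv (S : SHeap) : Finset ℕ := S.foldr (fun F acc => F.lbv ∪ acc) ∅

/-- plugging an expression into the composed evaluation context of a structured heap -/
def splug : SHeap → Expr → Expr
  | [], M => M
  | F :: S, M => splug S (F.plug M)

/-- the evaluation context denoted by a structured heap -/
def toCtx : SHeap → Ctx
  | [] => .hole
  | F :: S => (toCtx S).comp F.toCtx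

/-- well-formedness of structured heaps -/
def swf : SHeap → Prop
  | [] => True
  | .appF M :: S => FV M ⊆ slbv S ∧ swf S
  | .letF x M :: S => FV M ⊆ slbv S ∧ x ∉ slbv S ∧ swf S
  | .demF x E :: S => FV (Ctx.plug E (.var x)) ⊆ insert x (slbv S) ∧ x ∉ slbv S ∧ swf S

/-- well-formedness of structured configurations -/
def ConfigWF (S : SHeap) (M : Expr) : Prop := swf S ∧ FV M ⊆ slbv S

/-- Θ: a (reversed) sequence of let-frames -/
def IsLets (Θ : SHeap) : Prop := ∀ F ∈ Θ, F.IsLet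

/-- The instrumented natural semantics of λ_let. -/
inductive IEval : SHeap → Expr → SHeap → Expr → Prop
  | lam (S x M) : IEval S (.lam x M) S (.lam x M)
  | app {S M₁ M₂ S₁ Θ x N x' S₂ V} :
      IsLets Θ →
      IEval (.appF M₂ :: S) M₁ (Θ ++ .appF M₂ :: S₁) (.lam x N) →
      x' ∉ slbv (Θ ++ S₁) ∪ FV M₂ ∪ FV N →
      IEval (.letF x' M₂ :: (Θ ++ S₁)) (subst N x x') S₂ V →
      IEval S (.app M₁ M₂) S₂ V
  | letin {S x N M x' S' V} :
      x' ∉ slbv S ∪ FV N ∪ FV M →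
      IEval (.letF x' N :: S) (subst M x x') S' V →
      IEval S (.letE x N M) S' V
  | var {S S₁ S₂ Θ x M V} :
      IsLets Θ →
      IEval (.demF x (toCtx S₁) :: S) M (Θ ++ .demF x (toCtx S₁) :: S₂) V →
      IEval (S₁ ++ .letF x M :: S) (.var x) (S₁ ++ .letF x V :: (Θ ++ S₂)) V

/-- flattening of a structured heap into an ordered heap (outermost binding first) -/
def decomp : SHeap → Heap
  | [] => []
  | .letF x M :: S => decomp S ++ [(x, M)]
  | _ :: S => decomp S

/-- frames agree up to updating of a let-bound expression -/
def FrameMatch (F F' : Frame) : Prop :=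
  F = F' ∨ ∃ x M N, F = .letF x M ∧ F' = .letF x N

/-- the preorder ⊑ on structured heaps, via strictly monotone injections -/
def HpLe (S S' : SHeap) : Prop :=
  ∃ ι : Fin S.length → Fin S'.length, StrictMono ι ∧
    (∀ i, FrameMatch (S.get i) (S'.get (ι i))) ∧
    (∀ j : Fin S'.length, (∀ i, ι i ≠ j) → ∃ x M, S'.get j = Frame.letF x M)

/-! ## Nestings of let-bindings Θ ::= [] | Θ[let x = M in []] -/

/-- a nesting of let-bindings; the head is the innermost binding -/
abbrev LetNest := List (ℕ × Expr)

def tplug : LetNest → Expr → Expr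
  | [], M => M
  | (x, N) :: Θ, M => tplug Θ (.letE x N M)

/-- ⌊Θ⌋ : flattening a let-nesting into a heap (outermost binding first) -/
def theapOf (Θ : LetNest) : Heap := Θ.reverse

/-! ## α-equivalence -/

inductive AlphaEq : Expr → Expr → Prop
  | var (x) : AlphaEq (.var x) (.var x)
  | app {M M' N N'} : AlphaEq M M' → AlphaEq N N' → AlphaEq (.app M N) (.app M' N')
  | lam {x y M N} :
      (∀ z, z ∉ FV M ∪ FV N ∪ {x, y} → AlphaEq (subst M x z) (subst N y z)) →
      AlphaEq (.lam x M) (.lam y N)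
  | letE {x y M M' N N'} : AlphaEq M M' →
      (∀ z, z ∉ FV N ∪ FV N' ∪ {x, y} → AlphaEq (subst N x z) (subst N' y z)) →
      AlphaEq (.letE x M N) (.letE y M' N')

/-! ## β_need-rooted reductions -/

def BetaRooted (N M M' : Expr) : Prop :=
  ∃ Θ x N', M = tplug Θ (.app (.lam x N') N) ∧ M' = tplug Θ (.letE x N N')

/-- `n`-step reduction preserving a β_need-root with argument `N` -/
def StepNAvoid (N : Expr) : ℕ → Expr → Expr → Prop
  | 0, M, M'' => M = M''
  | n + 1, M, M'' => ∃ M', Step M M' ∧ ¬ BetaRooted N M M' ∧ StepNAvoid N n M' M''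

/-- a judgment is promising if its configuration is closed and good -/
def Promising (Ψ : Heap) (M : Expr) (X : Finset ℕ) : Prop :=
  ConfigClosed Ψ M ∧ ConfigGood Ψ X

/-- Derivability in the natural semantics with every judgment in the
derivation being promising. -/
inductive EvalP : Heap → Expr → Finset ℕ → Heap → Expr → Prop
  | lam (Ψ x M X) : Promising Ψ (.lam x M) X → EvalP Ψ (.lam x M) X Ψ (.lam x M)
  | app {Ψ M₁ M₂ X Φ x N x' Ψ' V} :
      Promising Ψ (.app M₁ M₂) X →
      EvalP Ψ M₁ X Φ (.lam x N) →
      x' ∉ heapDom Φ ∪ X ∪ FV M₂ ∪ FV N →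
      EvalP (Φ ++ [(x', M₂)]) (subst N x x') X Ψ' V →
      EvalP Ψ (.app M₁ M₂) X Ψ' V
  | letE {Ψ x N M X x' Φ V} :
      Promising Ψ (.letE x N M) X →
      x' ∉ heapDom Ψ ∪ X ∪ FV N ∪ FV M →
      EvalP (Ψ ++ [(x', N)]) (subst M x x') X Φ V →
      EvalP Ψ (.letE x N M) X Φ V
  | var {Ψ M X Φ Ψ' V x} :
      Promising (Ψ ++ (x, M) :: Φ) (.var x) X →
      EvalP Ψ M (X ∪ {x} ∪ heapDom Φ) Ψ' V →
      EvalP (Ψ ++ (x, M) :: Φ) (.var x) X (Ψ' ++ (x, V) :: Φ) V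


/-! ## Auxiliary lemmas -/

lemma heapDom_append (Ψ Φ : Heap) : heapDom (Ψ ++ Φ) = heapDom Ψ ∪ heapDom Φ := by
  simp [heapDom]

lemma heapDom_cons (x : ℕ) (M : Expr) (Ψ : Heap) :
    heapDom ((x, M) :: Ψ) = insert x (heapDom Ψ) := by simp [heapDom]

lemma mem_heapDom {z : ℕ} {Ψ : Heap} : z ∈ heapDom Ψ ↔ z ∈ Ψ.map Prod.fst := by
  simp [heapDom]

lemma heapClosedFrom_mono : ∀ (Ψ : Heap) {S T : Finset ℕ}, S ⊆ T →
    heapClosedFrom S Ψ → heapClosedFrom T Ψ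
  | [], _, _, _, _ => trivial
  | (x, M) :: rest, S, T, h, ⟨h1, h2⟩ =>
    ⟨h1.trans h, heapClosedFrom_mono rest (Finset.insert_subset_insert _ h) h2⟩

lemma heapClosedFrom_congr : ∀ (Ψ : Heap) {S T : Finset ℕ}, S = T →
    (heapClosedFrom S Ψ ↔ heapClosedFrom T Ψ) := by
  intro Ψ S T h; rw [h]

lemma heapClosedFrom_append : ∀ (Ψ Φ : Heap) (S : Finset ℕ),
    heapClosedFrom S (Ψ ++ Φ) ↔ heapClosedFrom S Ψ ∧ heapClosedFrom (S ∪ heapDom Ψ) Φ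
  | [], Φ, S => by simp [heapClosedFrom, heapDom]
  | (x, M) :: rest, Φ, S => by
    show (FV M ⊆ S ∧ heapClosedFrom (insert x S) (rest ++ Φ)) ↔
      (FV M ⊆ S ∧ heapClosedFrom (insert x S) rest) ∧
        heapClosedFrom (S ∪ heapDom ((x, M) :: rest)) Φ
    rw [heapClosedFrom_append rest Φ, heapDom_cons, Finset.union_insert,
      Finset.insert_union, and_assoc]

lemma mem_FV_subst {z : ℕ} : ∀ (M : Expr) (x x' : ℕ),
    z ∈ FV (subst M x x') → (z ∈ FV M ∧ z ≠ x) ∨ z = x'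
  | .var y, x, x' => by
    simp only [subst]
    split_ifs with h <;> simp [FV] <;> rintro rfl <;> tauto
  | .lam y M, x, x' => by
    simp only [subst]
    split_ifs with h
    · intro hz; left; simp [FV] at hz ⊢; subst h; tauto
    · intro hz
      simp only [FV, Finset.mem_sdiff, Finset.mem_singleton] at hz ⊢
      rcases mem_FV_subst M x x' hz.1 with ⟨h1, h2⟩ | rfl
      · exact Or.inl ⟨⟨h1, hz.2⟩, h2⟩
      · exact Or.inr rfl
  | .app M N, x, x' => by
    simp only [subst, FV, Finset.mem_union]
    rintro (hz | hz)
    · rcases mem_FV_subst M x x' hz with ⟨h1, h2⟩ | rfl <;> tauto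
    · rcases mem_FV_subst N x x' hz with ⟨h1, h2⟩ | rfl <;> tauto
  | .letE y M N, x, x' => by
    simp only [subst, FV, Finset.mem_union, Finset.mem_sdiff, Finset.mem_singleton]
    rintro (hz | ⟨hz, hzy⟩)
    · rcases mem_FV_subst M x x' hz with ⟨h1, h2⟩ | rfl <;> tauto
    · split_ifs at hz with h
      · subst h; tauto
      · rcases mem_FV_subst N x x' hz with ⟨h1, h2⟩ | rfl <;> tauto

lemma FV_subst_subset (M : Expr) (x x' : ℕ) :
    FV (subst M x x') ⊆ (FV M \ {x}) ∪ {x'} := by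
  intro z hz
  rcases mem_FV_subst M x x' hz with ⟨h1, h2⟩ | rfl
  · exact Finset.mem_union_left _ (Finset.mem_sdiff.2 ⟨h1, by simpa using h2⟩)
  · exact Finset.mem_union_right _ (Finset.mem_singleton_self _)

lemma nodup_append_decomp {Ψ Φ : Heap} {x : ℕ} {M : Expr}
    (h : ((Ψ ++ (x, M) :: Φ).map Prod.fst).Nodup) :
    (Ψ.map Prod.fst).Nodup ∧ (Φ.map Prod.fst).Nodup ∧ x ∉ heapDom Ψ ∧
      x ∉ heapDom Φ ∧ Disjoint (heapDom Ψ) (heapDom Φ) := by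
  rw [List.map_append, List.map_cons, List.nodup_append] at h
  obtain ⟨h1, h2, h3⟩ := h
  rw [List.nodup_cons] at h2
  refine ⟨h1, h2.2, ?_, by simpa [mem_heapDom] using h2.1, ?_⟩
  · rw [mem_heapDom]; intro hx; exact h3 x hx x List.mem_cons_self rfl
  · rw [Finset.disjoint_left]
    intro a ha hb
    rw [mem_heapDom] at ha hb
    exact h3 a ha a (List.mem_cons_of_mem _ hb) rfl

/-- Invariance of well-formedness under the natural semantics of λ_let. -/
theorem eval_wf_invariant {Ψ Φ : Heap} {M V : Expr} {X : Finset ℕ}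
    (hclosed : ConfigClosed Ψ M) (hgood : ConfigGood Ψ X)
    (h : Eval Ψ M X Φ V) :
    ConfigClosed Φ V ∧ ConfigGood Φ X ∧ heapDom Ψ ⊆ heapDom Φ ∧
      EvalP Ψ M X Φ V := by
  revert hclosed hgood
  induction h with
  | lam Ψ x M X =>
    intro hclosed hgood
    exact ⟨hclosed, hgood, subset_rfl, .lam _ _ _ _ ⟨hclosed, hgood⟩⟩
  | @app Ψ M₁ M₂ X Φ x N x' Ψ' V h1 hx' h2 ih1 ih2 =>
    intro hclosed hgood
    obtain ⟨hc, hfv⟩ := hclosed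
    have hfv1 : FV M₁ ⊆ heapDom Ψ := (Finset.subset_union_left).trans hfv
    have hfv2 : FV M₂ ⊆ heapDom Ψ := (Finset.subset_union_right).trans hfv
    obtain ⟨⟨hcΦ, hfvlam⟩, ⟨hndΦ, hdjΦ⟩, hsub1, hp1⟩ := ih1 ⟨hc, hfv1⟩ hgood
    have hfvN : FV N \ {x} ⊆ heapDom Φ := hfvlam
    have hx'Φ : x' ∉ heapDom Φ := fun hh => hx' (by simp [hh])
    have hx'X : x' ∉ X := fun hh => hx' (by simp [hh])
    have hclosed2 : ConfigClosed (Φ ++ [(x', M₂)]) (subst N x x') := by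
      constructor
      · rw [heapClosedFrom_append]
        exact ⟨hcΦ, (hfv2.trans hsub1).trans (by simp), trivial⟩
      · intro z hz
        rw [heapDom_append, heapDom_cons]
        rcases mem_FV_subst N x x' hz with ⟨hz1, hz2⟩ | rfl
        · exact Finset.mem_union_left _ (hfvN (Finset.mem_sdiff.2 ⟨hz1, by simpa using hz2⟩))
        · simp
    have hgood2 : ConfigGood (Φ ++ [(x', M₂)]) X := by
      constructor
      · rw [List.map_append, List.nodup_append]
        refine ⟨hndΦ, by simp, ?_⟩
        rintro a ha b hb rfl
        simp only [List.map_cons, List.map_nil, List.mem_singleton] at hb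
        subst hb
        exact hx'Φ (mem_heapDom.2 ha)
      · rw [heapDom_append, heapDom_cons, Finset.disjoint_union_left]
        exact ⟨hdjΦ, by simpa [heapDom, Finset.disjoint_left] using hx'X⟩
    obtain ⟨hcl', hg', hsub2, hp2⟩ := ih2 hclosed2 hgood2
    refine ⟨hcl', hg', ?_, .app ⟨⟨hc, hfv⟩, hgood⟩ hp1 hx' hp2⟩
    refine (hsub1.trans ?_).trans hsub2
    rw [heapDom_append]; exact Finset.subset_union_left
  | @letE Ψ x N M X x' Φ V hx' h1 ih =>
    intro hclosed hgood
    obtain ⟨hc, hfv⟩ := hclosed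
    have hfvN : FV N ⊆ heapDom Ψ := (Finset.subset_union_left).trans hfv
    have hfvM : FV M \ {x} ⊆ heapDom Ψ := (Finset.subset_union_right).trans hfv
    have hx'Ψ : x' ∉ heapDom Ψ := fun hh => hx' (by simp [hh])
    have hx'X : x' ∉ X := fun hh => hx' (by simp [hh])
    have hclosed2 : ConfigClosed (Ψ ++ [(x', N)]) (subst M x x') := by
      constructor
      · rw [heapClosedFrom_append]
        exact ⟨hc, hfvN.trans (by simp), trivial⟩
      · intro z hz
        rw [heapDom_append, heapDom_cons]
        rcases mem_FV_subst M x x' hz with ⟨hz1, hz2⟩ | rfl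
        · exact Finset.mem_union_left _ (hfvM (Finset.mem_sdiff.2 ⟨hz1, by simpa using hz2⟩))
        · simp
    have hgood2 : ConfigGood (Ψ ++ [(x', N)]) X := by
      constructor
      · rw [List.map_append, List.nodup_append]
        refine ⟨hgood.1, by simp, ?_⟩
        rintro a ha b hb rfl
        simp only [List.map_cons, List.map_nil, List.mem_singleton] at hb
        subst hb
        exact hx'Ψ (mem_heapDom.2 ha)
      · rw [heapDom_append, heapDom_cons, Finset.disjoint_union_left]
        exact ⟨hgood.2, by simpa [heapDom, Finset.disjoint_left] using hx'X⟩
    obtain ⟨hcl', hg', hsub2, hp2⟩ := ih hclosed2 hgood2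
    refine ⟨hcl', hg', ?_, .letE ⟨⟨hc, hfv⟩, hgood⟩ hx' hp2⟩
    refine Finset.Subset.trans ?_ hsub2
    rw [heapDom_append]; exact Finset.subset_union_left
  | @var Ψ M X Φ Ψ' V x h1 ih =>
    intro hclosed hgood
    have hP : Promising (Ψ ++ (x, M) :: Φ) (.var x) X := ⟨hclosed, hgood⟩
    obtain ⟨hc, _⟩ := hclosed
    rw [heapClosedFrom_append] at hc
    obtain ⟨hcΨ, hfvM, hcΦ⟩ := hc
    simp only [Finset.empty_union] at hfvM hcΦ
    obtain ⟨hnd, hdj⟩ := hgood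
    obtain ⟨hndΨ, hndΦ, hxΨ, hxΦ, hdjΨΦ⟩ := nodup_append_decomp hnd
    have hdomEq : heapDom (Ψ ++ (x, M) :: Φ) = heapDom Ψ ∪ insert x (heapDom Φ) := by
      rw [heapDom_append, heapDom_cons]
    rw [hdomEq, Finset.disjoint_union_left] at hdj
    obtain ⟨hdjΨX, hdjxΦX⟩ := hdj
    have hgood1 : ConfigGood Ψ (X ∪ {x} ∪ heapDom Φ) := by
      refine ⟨hndΨ, ?_⟩
      rw [Finset.disjoint_union_right, Finset.disjoint_union_right]
      exact ⟨⟨hdjΨX, by simpa [Finset.disjoint_left] using hxΨ⟩, hdjΨΦ⟩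
    obtain ⟨⟨hcΨ', hfvV⟩, ⟨hndΨ', hdj'⟩, hsub, hp⟩ := ih ⟨hcΨ, hfvM⟩ hgood1
    rw [Finset.disjoint_union_right, Finset.disjoint_union_right] at hdj'
    obtain ⟨⟨hdjΨ'X, hdjΨ'x⟩, hdjΨ'Φ⟩ := hdj'
    have hxΨ' : x ∉ heapDom Ψ' := by
      intro hh
      exact Finset.disjoint_left.1 hdjΨ'x hh (Finset.mem_singleton_self x)
    have hdomEq' : heapDom (Ψ' ++ (x, V) :: Φ) = heapDom Ψ' ∪ insert x (heapDom Φ) := by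
      rw [heapDom_append, heapDom_cons]
    have hclosedR : ConfigClosed (Ψ' ++ (x, V) :: Φ) V := by
      constructor
      · rw [heapClosedFrom_append]
        refine ⟨hcΨ', ?_, ?_⟩
        · simpa using hfvV
        · refine heapClosedFrom_mono Φ ?_ hcΦ
          exact Finset.insert_subset_insert _ (by simpa using hsub)
      · rw [hdomEq']
        exact hfvV.trans Finset.subset_union_left
    have hgoodR : ConfigGood (Ψ' ++ (x, V) :: Φ) X := by
      constructor
      · rw [List.map_append, List.map_cons, List.nodup_append, List.nodup_cons]
        refine ⟨hndΨ', ⟨by simpa [mem_heapDom] using hxΦ, hndΦ⟩, ?_⟩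
        rintro a ha b hb rfl
        rcases List.mem_cons.1 hb with rfl | hb
        · exact hxΨ' (mem_heapDom.2 ha)
        · exact Finset.disjoint_left.1 hdjΨ'Φ (mem_heapDom.2 ha) (mem_heapDom.2 hb)
      · rw [hdomEq', Finset.disjoint_union_left]
        exact ⟨hdjΨ'X, hdjxΦX⟩
    refine ⟨hclosedR, hgoodR, ?_, .var hP hp⟩
    rw [hdomEq, hdomEq']
    exact Finset.union_subset_union_left hsub
end

section
/- Monotonic growth of structured heaps in λ_let: if ⟨Σ⟩M is well-formed and ⟨Σ⟩M ⇓ ⟨Σ'⟩V in the instrumented natural semantics, then Σ ⊑ Σ', where ⊑ is the preorder on structured heaps defined via order-preserving injections of frames. -/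
open Expr

/-! ## Auxiliary development for heap growth -/

/-- An inductive presentation of the heap preorder. -/
inductive HG : SHeap → SHeap → Prop
  | nil : HG [] []
  | cons {F F' : Frame} {S S' : SHeap} :
      FrameMatch F F' → HG S S' → HG (F :: S) (F' :: S')
  | letr {S S' : SHeap} (x : ℕ) (M : Expr) : HG S S' → HG S (.letF x M :: S')

lemma frameMatch_rfl (F : Frame) : FrameMatch F F := Or.inl rfl

lemma frameMatch_trans {F G H : Frame} (h1 : FrameMatch F G) (h2 : FrameMatch G H) :
    FrameMatch F H := by
  rcases h1 with rfl | ⟨x, M, N, rfl, rfl⟩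
  · exact h2
  · rcases h2 with rfl | ⟨y, P, Q, hy, rfl⟩
    · exact Or.inr ⟨x, M, N, rfl, rfl⟩
    · injection hy with h h'
      subst h
      exact Or.inr ⟨x, M, Q, rfl, rfl⟩

lemma letF_of_match {x : ℕ} {M : Expr} {F' : Frame} (h : FrameMatch (.letF x M) F') :
    ∃ y N, F' = Frame.letF y N := by
  rcases h with rfl | ⟨y, P, Q, hy, rfl⟩
  · exact ⟨x, M, rfl⟩
  · exact ⟨y, Q, rfl⟩

lemma hg_refl (S : SHeap) : HG S S := by
  induction S with
  | nil => exact HG.nil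
  | cons F S ih => exact HG.cons (frameMatch_rfl F) ih

lemma hg_trans {S S' S'' : SHeap} (h1 : HG S S') (h2 : HG S' S'') : HG S S'' := by
  induction h2 generalizing S with
  | nil => exact h1
  | cons hm h2' ih =>
    cases h1 with
    | cons hm' h1' => exact HG.cons (frameMatch_trans hm' hm) (ih h1')
    | letr x M h1' =>
      obtain ⟨y, N, rfl⟩ := letF_of_match hm
      exact HG.letr y N (ih h1')
  | letr x M h2' ih => exact HG.letr x M (ih h1)

lemma hg_drop {x : ℕ} {M : Expr} {S S' : SHeap}
    (h : HG (.letF x M :: S) S') : HG S S' := by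
  generalize hT : Frame.letF x M :: S = T at h
  induction h generalizing S with
  | nil => cases hT
  | cons hm h' ih =>
    cases hT
    obtain ⟨y, N, rfl⟩ := letF_of_match hm
    exact HG.letr y N h'
  | letr y N h' ih => exact HG.letr y N (ih hT)

lemma hg_lets {Θ S S' : SHeap} (hΘ : IsLets Θ) (h : HG S S') : HG S (Θ ++ S') := by
  induction Θ with
  | nil => exact h
  | cons F Θ' ih =>
    have hF : F.IsLet := hΘ F List.mem_cons_self
    cases F with
    | letF y N => exact HG.letr y N (ih fun G hG => hΘ G (List.mem_cons_of_mem _ hG))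
    | appF N => exact hF.elim
    | demF y E => exact hF.elim

lemma hg_strip {F : Frame} {S Θ S' : SHeap} (hF : ¬ F.IsLet) (hΘ : IsLets Θ)
    (h : HG (F :: S) (Θ ++ F :: S')) : HG S S' := by
  induction Θ with
  | nil =>
    cases h with
    | cons hm h' => exact h'
    | letr y N h' =>
      exact absurd trivial hF
  | cons G Θ' ih =>
    have hG : G.IsLet := hΘ G List.mem_cons_self
    cases h with
    | cons hm h' =>
      rcases hm with rfl | ⟨y, P, Q, rfl, rfl⟩
      · exact absurd hG hF
      · exact absurd trivial hF
    | letr y N h' =>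
      exact ih (fun G' hG' => hΘ G' (List.mem_cons_of_mem _ hG')) h'

lemma hg_append_left (P : SHeap) {S S' : SHeap} (h : HG S S') : HG (P ++ S) (P ++ S') := by
  induction P with
  | nil => exact h
  | cons F P' ih => exact HG.cons (frameMatch_rfl F) ih

lemma ieval_hg {S S' : SHeap} {M V : Expr} (h : IEval S M S' V) : HG S S' := by
  induction h with
  | lam S x M => exact hg_refl S
  | app hΘ h1 hx h2 ih1 ih2 =>
    rename_i S M₁ M₂ S₁ Θ x N x' S₂ V
    have hS : HG S S₁ := hg_strip (show ¬ (Frame.appF M₂).IsLet from fun h => h) hΘ ih1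
    have h3 : HG (Θ ++ S₁) S₂ := hg_drop ih2
    exact hg_trans (hg_trans hS (hg_lets hΘ (hg_refl S₁))) h3
  | letin hx h' ih => exact hg_drop ih
  | var hΘ h' ih =>
    rename_i S S₁ S₂ Θ x M V
    have hS : HG S S₂ := hg_strip (show ¬ (Frame.demF x (toCtx S₁)).IsLet from fun h => h) hΘ ih
    exact hg_append_left S₁
      (HG.cons (Or.inr ⟨x, M, V, rfl, rfl⟩) (hg_lets hΘ hS))

lemma hg_hple {S S' : SHeap} (h : HG S S') : HpLe S S' := by
  induction h with
  | nil => exact ⟨fun i => i.elim0, fun a => a.elim0, fun i => i.elim0, fun j => j.elim0⟩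
  | cons hm h' ih =>
    rename_i F F' S S'
    obtain ⟨ι, hmono, hmatch, hunhit⟩ := ih
    refine ⟨Fin.cases ⟨0, Nat.succ_pos _⟩ (fun i => (ι i).succ), ?_, ?_, ?_⟩
    · intro a b hab
      induction a using Fin.cases with
      | zero =>
        induction b using Fin.cases with
        | zero => exact absurd hab (lt_irrefl _)
        | succ j => simp only [Fin.cases_zero, Fin.cases_succ]; exact Fin.succ_pos _
      | succ i =>
        induction b using Fin.cases with
        | zero => exact absurd hab (by simp [Fin.lt_def])
        | succ j =>
          simp only [Fin.cases_succ]
          exact Fin.succ_lt_succ_iff.mpr (hmono (Fin.succ_lt_succ_iff.mp hab))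
    · intro i
      induction i using Fin.cases with
      | zero => simpa using hm
      | succ i => simpa using hmatch i
    · intro j hj
      induction j using Fin.cases with
      | zero => exact absurd (by simp) (hj ⟨0, Nat.succ_pos _⟩)
      | succ k =>
        have := hunhit k (fun i hi => hj i.succ (by simpa using hi))
        simpa using this
  | letr x M h' ih =>
    rename_i S S'
    obtain ⟨ι, hmono, hmatch, hunhit⟩ := ih
    refine ⟨fun i => (ι i).succ, ?_, ?_, ?_⟩
    · intro a b hab
      exact Fin.succ_lt_succ_iff.mpr (hmono hab)
    · intro i
      simpa using hmatch i
    · intro j hj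
      induction j using Fin.cases with
      | zero => exact ⟨x, M, by simp⟩
      | succ k =>
        have := hunhit k (fun i hi => hj i (by simpa using hi))
        simpa using this

/-- Structured heaps only grow along derivations of the instrumented natural
semantics. -/
theorem ieval_heap_grows {S S' : SHeap} {M V : Expr}
    (hwf : ConfigWF S M) (h : IEval S M S' V) : HpLe S S' :=
  hg_hple (ieval_hg h)
end

section
/- Correctness of the natural semantics of λ_let with respect to the instrumented natural semantics: if ⟨Ψ⟩M is closed and X-good and ⟨Ψ⟩M ⇓_X ⟨Φ⟩V, then for every structured heap Σ with ⟦Σ⟧ = Ψ (the flattening of Σ into an ordered heap of let-bindings) such that ⟨Σ⟩M is well-formed, there exists Σ' with ⟨Σ⟩M ⇓ ⟨Σ'⟩V in the instrumented natural semantics and ⟦Σ'⟧ = Φ. -/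
open Expr

/-! ### Auxiliary lemmas for the correctness proof -/

lemma decomp_append (A B : SHeap) : decomp (A ++ B) = decomp B ++ decomp A := by
  induction A with
  | nil => simp [decomp]
  | cons F A ih =>
    cases F <;> simp [decomp, ih]

lemma slbv_cons (F : Frame) (S : SHeap) : slbv (F :: S) = F.lbv ∪ slbv S := rfl

lemma slbv_append (A B : SHeap) : slbv (A ++ B) = slbv A ∪ slbv B := by
  induction A with
  | nil => simp [slbv]
  | cons F A ih => simp [slbv_cons, ih, Finset.union_assoc]

lemma heapDom_decomp (S : SHeap) : heapDom (decomp S) = slbv S := by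
  induction S with
  | nil => rfl
  | cons F S ih =>
    cases F with
    | appF N => simpa [decomp, slbv_cons, Frame.lbv] using ih
    | letF x M =>
      simp [decomp, slbv_cons, Frame.lbv, heapDom, ← ih]
    | demF x E => simpa [decomp, slbv_cons, Frame.lbv] using ih

lemma decomp_split {S : SHeap} {Ψ Φ : Heap} {x : ℕ} {M : Expr}
    (h : decomp S = Ψ ++ (x, M) :: Φ) :
    ∃ S₁ S₀ : SHeap, S = S₁ ++ .letF x M :: S₀ ∧ decomp S₁ = Φ ∧ decomp S₀ = Ψ := by
  induction S generalizing Φ with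
  | nil => simp [decomp] at h
  | cons F S ih =>
    cases F with
    | appF N =>
      obtain ⟨S₁, S₀, rfl, h1, h0⟩ := ih (by simpa [decomp] using h)
      exact ⟨.appF N :: S₁, S₀, rfl, by simpa [decomp] using h1, h0⟩
    | demF y E =>
      obtain ⟨S₁, S₀, rfl, h1, h0⟩ := ih (by simpa [decomp] using h)
      exact ⟨.demF y E :: S₁, S₀, rfl, by simpa [decomp] using h1, h0⟩
    | letF y N =>
      rcases List.eq_nil_or_concat Φ with rfl | ⟨Φ', p, rfl⟩
      · have h' : decomp S ++ [(y, N)] = Ψ ++ [(x, M)] := by simpa [decomp] using h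
        obtain ⟨h0, h2⟩ := List.append_inj' h' rfl
        obtain ⟨rfl, rfl⟩ : y = x ∧ N = M := by
          have := List.head_eq_of_cons_eq h2; exact ⟨congrArg Prod.fst this, congrArg Prod.snd this⟩
        exact ⟨[], S, rfl, rfl, h0⟩
      · have h' : decomp S ++ [(y, N)] = (Ψ ++ (x, M) :: Φ') ++ [p] := by
          simpa [decomp] using h
        obtain ⟨h0, h2⟩ := List.append_inj' h' rfl
        have hp : p = (y, N) := (List.head_eq_of_cons_eq h2).symm
        obtain ⟨S₁, S₀, rfl, h1, h0'⟩ := ih h0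
        refine ⟨.letF y N :: S₁, S₀, rfl, ?_, h0'⟩
        simp [decomp, h1, hp]

/-- heap extension: inserting let-frames and updating let-bound expressions -/
inductive HExt : SHeap → SHeap → Prop
  | nil : HExt [] []
  | cons {F F' : Frame} {S S' : SHeap} :
      FrameMatch F F' → HExt S S' → HExt (F :: S) (F' :: S')
  | ins {S S' : SHeap} (x : ℕ) (M : Expr) : HExt S S' → HExt S (.letF x M :: S')

lemma HExt.refl (S : SHeap) : HExt S S := by
  induction S with
  | nil => exact HExt.nil
  | cons F S ih => exact HExt.cons (Or.inl rfl) ih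

lemma FrameMatch.trans {F F' F'' : Frame} (h1 : FrameMatch F F') (h2 : FrameMatch F' F'') :
    FrameMatch F F'' := by
  rcases h1 with rfl | ⟨x, M, N, rfl, rfl⟩
  · exact h2
  · rcases h2 with rfl | ⟨y, M', N', hE, rfl⟩
    · exact Or.inr ⟨x, M, N, rfl, rfl⟩
    · cases hE; exact Or.inr ⟨x, M, N', rfl, rfl⟩

lemma HExt.trans {S' S'' : SHeap} (h2 : HExt S' S'') :
    ∀ {S : SHeap}, HExt S S' → HExt S S'' := by
  induction h2 with
  | nil => intro S h; exact h
  | @cons F' F'' T' T'' hm he ih =>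
    intro S h
    cases h with
    | cons hm' he' => exact HExt.cons (hm'.trans hm) (ih he')
    | ins x M he' =>
      rcases hm with rfl | ⟨y, M', N', hE, rfl⟩
      · exact HExt.ins _ _ (ih he')
      · exact HExt.ins _ _ (ih he')
  | ins x M he ih => intro S h; exact HExt.ins x M (ih h)

lemma isLet_iff {F : Frame} : F.IsLet ↔ ∃ x M, F = .letF x M := by
  cases F <;> simp [Frame.IsLet]

lemma HExt.insLets {Θ S S' : SHeap} (hΘ : IsLets Θ) (h : HExt S S') : HExt S (Θ ++ S') := by
  induction Θ with
  | nil => exact h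
  | cons F Θ ih =>
    obtain ⟨x, M, rfl⟩ := isLet_iff.mp (hΘ F (by simp))
    exact HExt.ins x M (ih (fun F hF => hΘ F (by simp [hF])))

lemma HExt.appendLeft (C : SHeap) {S S' : SHeap} (h : HExt S S') : HExt (C ++ S) (C ++ S') := by
  induction C with
  | nil => exact h
  | cons F C ih => exact HExt.cons (Or.inl rfl) ih

lemma HExt.peel {F : Frame} {S S₁ : SHeap} :
    ∀ {Θ : SHeap}, IsLets Θ → ¬ F.IsLet → HExt (F :: S) (Θ ++ F :: S₁) → HExt S S₁ := by
  intro Θ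
  induction Θ with
  | nil =>
    intro _ hF h
    cases h with
    | cons hm he => exact he
    | ins x M he => exact absurd trivial hF
  | cons L Θ ih =>
    intro hΘ hF h
    cases h with
    | cons hm he =>
      obtain ⟨x, M, rfl⟩ := isLet_iff.mp (hΘ L (by simp))
      rcases hm with rfl | ⟨y, M', N', hE, _⟩
      · exact absurd trivial hF
      · exact absurd (by rw [hE]; trivial) hF
    | ins x M he => exact ih (fun G hG => hΘ G (by simp [hG])) hF he

lemma ext_shape {F : Frame} {S S' : SHeap} (h : HExt (F :: S) S') (hF : ¬ F.IsLet) :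
    ∃ Θ S₂, IsLets Θ ∧ S' = Θ ++ F :: S₂ := by
  generalize hT : F :: S = T at h
  induction h with
  | nil => simp at hT
  | @cons F₀ F' S₀ S₀' hm he ih =>
    obtain ⟨rfl, rfl⟩ : F₀ = F ∧ S₀ = S := by
      refine ⟨?_, ?_⟩ <;> cases hT <;> rfl
    rcases hm with rfl | ⟨y, M', N', rfl, _⟩
    · exact ⟨[], S₀', fun G hG => by simp at hG, rfl⟩
    · exact absurd trivial hF
  | ins x M he ih =>
    obtain ⟨Θ, S₂, hΘ, rfl⟩ := ih hT
    exact ⟨.letF x M :: Θ, S₂, by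
      intro G hG
      rcases List.mem_cons.mp hG with rfl | hG
      · trivial
      · exact hΘ G hG, rfl⟩

lemma ieval_ext {S S' : SHeap} {M V : Expr} (h : IEval S M S' V) : HExt S S' := by
  induction h with
  | lam S x M => exact HExt.refl S
  | @app S M₁ M₂ S₁ Θ x N x' S₂ V hΘ h1 hx h2 ih1 ih2 =>
    have hS1 : HExt S S₁ := HExt.peel hΘ (by simp [Frame.IsLet]) ih1
    exact HExt.trans ih2 (HExt.ins x' M₂ (hS1.insLets hΘ))
  | @letin S x N M x' S' V hx h2 ih =>
    exact HExt.trans ih (HExt.ins x' N (HExt.refl S))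
  | @var S S₁ S₂ Θ x M V hΘ h ih =>
    have hS2 : HExt S S₂ := HExt.peel hΘ (by simp [Frame.IsLet]) ih
    exact HExt.appendLeft S₁
      (HExt.cons (Or.inr ⟨x, M, V, rfl, rfl⟩) (hS2.insLets hΘ))

theorem eval_implies_ieval_aux {Ψ Φ : Heap} {M V : Expr} {X : Finset ℕ}
    (h : Eval Ψ M X Φ V) :
    ∀ S : SHeap, decomp S = Ψ → ∃ S' : SHeap, IEval S M S' V ∧ decomp S' = Φ := by
  induction h with
  | lam Ψ x M X => exact fun S hS => ⟨S, IEval.lam S x M, hS⟩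
  | @app Ψ M₁ M₂ X Φ x N x' Ψ' V h1 hx h2 ih1 ih2 =>
    intro S hS
    obtain ⟨S', hI1, hd1⟩ := ih1 (.appF M₂ :: S) (by simpa [decomp] using hS)
    obtain ⟨Θ, S₁, hΘ, rfl⟩ := ext_shape (ieval_ext hI1) (by simp [Frame.IsLet])
    have hdec : decomp (Θ ++ S₁) = Φ := by
      rw [decomp_append]
      rw [decomp_append] at hd1
      simpa [decomp] using hd1
    have hdom : slbv (Θ ++ S₁) = heapDom Φ := by
      rw [← hdec, heapDom_decomp]
    have hx' : x' ∉ slbv (Θ ++ S₁) ∪ FV M₂ ∪ FV N := by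
      rw [hdom]
      intro hmem
      apply hx
      simp only [Finset.mem_union] at hmem ⊢
      tauto
    obtain ⟨S₂, hI2, hd2⟩ := ih2 (.letF x' M₂ :: (Θ ++ S₁)) (by simp [decomp, hdec])
    exact ⟨S₂, IEval.app hΘ hI1 hx' hI2, hd2⟩
  | @letE Ψ x N M X x' Φ V hx h2 ih =>
    intro S hS
    have hx' : x' ∉ slbv S ∪ FV N ∪ FV M := by
      rw [← hS, heapDom_decomp] at hx
      intro hmem
      apply hx
      simp only [Finset.mem_union] at hmem ⊢
      tauto
    obtain ⟨S', hI, hd⟩ := ih (.letF x' N :: S) (by simp [decomp, hS])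
    exact ⟨S', IEval.letin hx' hI, hd⟩
  | @var Ψ M X Φ Ψ' V x h ih =>
    intro S hS
    obtain ⟨S₁, S₀, rfl, hd1, hd0⟩ := decomp_split hS
    obtain ⟨S', hI, hd⟩ := ih (.demF x (toCtx S₁) :: S₀) (by simpa [decomp] using hd0)
    obtain ⟨Θ, S₂, hΘ, rfl⟩ := ext_shape (ieval_ext hI) (by simp [Frame.IsLet])
    refine ⟨S₁ ++ .letF x V :: (Θ ++ S₂), IEval.var hΘ hI, ?_⟩
    rw [decomp_append] at hd ⊢
    simp only [decomp] at hd ⊢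
    rw [decomp_append]
    simp [hd1, ← hd]

/-- Correctness of the natural semantics w.r.t. the instrumented natural
semantics of λ_let. -/
theorem eval_implies_ieval {Ψ Φ : Heap} {M V : Expr} {X : Finset ℕ}
    (hclosed : ConfigClosed Ψ M) (hgood : ConfigGood Ψ X)
    (h : Eval Ψ M X Φ V) :
    ∀ S : SHeap, decomp S = Ψ → ConfigWF S M →
      ∃ S' : SHeap, IEval S M S' V ∧ decomp S' = Φ :=
  fun S hS _ => eval_implies_ieval_aux h S hS
end

section
/- Function-position reduction lemma for λ_let: if Θ[M N] is a program, Θ[M N] →ⁿ Θ'[V N], and the reduction sequence preserves a β_need-root with argument N (no step in the sequence is a β_need reduction of an application whose argument is N at the root position), then Θ[M] →ⁿ' Θ'[V] for some n' ≤ n. -/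
open Expr

/-! ## Auxiliary development for the function-position reduction lemma -/

/-- let-nestings, outermost binding first -/
def tplugR : List (ℕ × Expr) → Expr → Expr
  | [], M => M
  | (x, N) :: L, M => .letE x N (tplugR L M)

lemma tplugR_append (L₁ L₂ : List (ℕ × Expr)) (M : Expr) :
    tplugR (L₁ ++ L₂) M = tplugR L₁ (tplugR L₂ M) := by
  induction L₁ with
  | nil => rfl
  | cons p L ih => cases p; simp [tplugR, ih]

lemma tplug_eq (Θ : LetNest) (M : Expr) : tplug Θ M = tplugR Θ.reverse M := by
  induction Θ generalizing M with
  | nil => rfl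
  | cons p Θ ih => cases p; simp [tplug, ih, tplugR_append, tplugR]

lemma tplugR_app_inj : ∀ (L L' : List (ℕ × Expr)) (M N M' N' : Expr),
    tplugR L (.app M N) = tplugR L' (.app M' N') → L = L' ∧ M = M' ∧ N = N' := by
  intro L
  induction L with
  | nil =>
    intro L' M N M' N' h
    cases L' with
    | nil =>
      simp only [tplugR, Expr.app.injEq] at h
      exact ⟨rfl, h.1, h.2⟩
    | cons p L' =>
      obtain ⟨x, Q⟩ := p
      exact absurd h (by simp [tplugR])
  | cons p L ih =>
    obtain ⟨x, Q⟩ := p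
    intro L' M N M' N' h
    cases L' with
    | nil => exact absurd h (by simp [tplugR])
    | cons p' L' =>
      obtain ⟨x', Q'⟩ := p'
      simp only [tplugR, Expr.letE.injEq] at h
      obtain ⟨hx, hQ, hrest⟩ := h
      obtain ⟨hL, hM, hN⟩ := ih L' M N M' N' hrest
      exact ⟨by rw [hx, hQ, hL], hM, hN⟩

lemma betaRooted_iff (N T T' : Expr) :
    BetaRooted N T T' ↔
      ∃ L x N', T = tplugR L (.app (.lam x N') N) ∧ T' = tplugR L (.letE x N N') := by
  constructor
  · rintro ⟨Θ, x, N', h1, h2⟩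
    exact ⟨Θ.reverse, x, N', by rw [h1, tplug_eq], by rw [h2, tplug_eq]⟩
  · rintro ⟨L, x, N', h1, h2⟩
    exact ⟨L.reverse, x, N', by rw [h1, tplug_eq, List.reverse_reverse],
           by rw [h2, tplug_eq, List.reverse_reverse]⟩

/-- Demand lemma: if an evaluation context with a demanded variable at its hole
denotes `Θ[M N]`, then the demand flows through `M`, and there is a corresponding
context for the stripped term. -/
lemma dem (N : Expr) : ∀ (E : Ctx) (y : ℕ) (L : List (ℕ × Expr)) (M : Expr),
    Ctx.plug E (.var y) = tplugR L (.app M N) →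
    ∃ E' : Ctx, ∀ X : Expr, ∃ L₁ M₁,
      Ctx.plug E X = tplugR L₁ (.app M₁ N) ∧ Ctx.plug E' X = tplugR L₁ M₁ := by
  intro E
  induction E with
  | hole =>
    intro y L M h
    exfalso
    cases L with
    | nil => simp [tplugR, Ctx.plug] at h
    | cons p L => obtain ⟨x, Q⟩ := p; simp [tplugR, Ctx.plug] at h
  | appL E₁ N₁ ih =>
    intro y L M h
    cases L with
    | nil =>
      simp only [Ctx.plug, tplugR, Expr.app.injEq] at h
      refine ⟨E₁, fun X => ⟨[], Ctx.plug E₁ X, ?_, rfl⟩⟩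
      simp [Ctx.plug, tplugR, h.2]
    | cons p L' =>
      obtain ⟨x, Q⟩ := p
      exact absurd h (by simp [Ctx.plug, tplugR])
  | letB x Q E₁ ih =>
    intro y L M h
    cases L with
    | nil => exact absurd h (by simp [Ctx.plug, tplugR])
    | cons p L' =>
      obtain ⟨x₀, Q₀⟩ := p
      simp only [Ctx.plug, tplugR, Expr.letE.injEq] at h
      obtain ⟨hx, hQ, hb⟩ := h
      obtain ⟨E', hE'⟩ := ih y L' M hb
      refine ⟨.letB x Q E', fun X => ?_⟩
      obtain ⟨L₁, M₁, h1, h2⟩ := hE' X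
      exact ⟨(x₀, Q₀) :: L₁, M₁, by simp [Ctx.plug, tplugR, h1, hx, hQ],
             by simp [Ctx.plug, tplugR, h2, hx, hQ]⟩
  | letD x E₁ E₂ ih₁ ih₂ =>
    intro y L M h
    cases L with
    | nil => exact absurd h (by simp [Ctx.plug, tplugR])
    | cons p L' =>
      obtain ⟨x₀, Q₀⟩ := p
      simp only [Ctx.plug, tplugR, Expr.letE.injEq] at h
      obtain ⟨hx, hQ, hb⟩ := h
      subst hx
      obtain ⟨E₂', hE₂'⟩ := ih₂ x L' M hb
      obtain ⟨L₂, M₂, hA, hB⟩ := hE₂' (.var x)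
      obtain ⟨hL₂, hM₂, -⟩ := tplugR_app_inj _ _ _ _ _ _ (hA.symm.trans hb)
      rw [hL₂, hM₂] at hB
      refine ⟨.letD x E₁ E₂', fun X => ?_⟩
      refine ⟨(x, Ctx.plug E₁ X) :: L', M, ?_, ?_⟩
      · simp [Ctx.plug, tplugR, hb]
      · simp [Ctx.plug, tplugR, hB]

/-- helper to build a `Step` under a `letB` wrapper -/
lemma step_letB {x : ℕ} {Q A B : Expr} (h : Step A B) :
    Step (.letE x Q A) (.letE x Q B) := by
  obtain ⟨E, a, b, hr, ha, hb⟩ := h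
  exact ⟨.letB x Q E, a, b, hr, by simp [Ctx.plug, ha], by simp [Ctx.plug, hb]⟩

/-- Single-step case analysis. -/
lemma stepCase (N : Expr) : ∀ (E : Ctx) (r r' : Expr), Redex r r' →
    ∀ (L : List (ℕ × Expr)) (M : Expr), Ctx.plug E r = tplugR L (.app M N) →
    (∃ L₁ M₁, Ctx.plug E r' = tplugR L₁ (.app M₁ N) ∧
        (Step (tplugR L M) (tplugR L₁ M₁) ∨ tplugR L M = tplugR L₁ M₁)) ∨
      BetaRooted N (Ctx.plug E r) (Ctx.plug E r') := by
  intro E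
  induction E with
  | hole =>
    intro r r' hred L M h
    simp only [Ctx.plug] at h ⊢
    cases L with
    | nil =>
      simp only [tplugR] at h ⊢
      cases hred with
      | beta x₀ M₀ N₀ =>
        obtain ⟨h1, h2⟩ := Expr.app.inj h
        subst h2
        exact Or.inr ((betaRooted_iff _ _ _).2 ⟨[], x₀, M₀, rfl, rfl⟩)
      | lift x₀ Q A N₀ hA =>
        obtain ⟨h1, h2⟩ := Expr.app.inj h
        subst h2
        refine Or.inl ⟨[(x₀, Q)], A, by simp [tplugR], Or.inr ?_⟩
        simp [tplugR, ← h1]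
      | deref x₀ V₀ E₂ hval => exact absurd h (by simp)
      | assoc x₀ y₀ Q₀ A E₂ hA => exact absurd h (by simp)
    | cons p L' =>
      obtain ⟨x, Q⟩ := p
      simp only [tplugR] at h ⊢
      cases hred with
      | beta x₀ M₀ N₀ => exact absurd h (by simp)
      | lift x₀ Q₀ A N₀ hA => exact absurd h (by simp)
      | deref x₀ V₀ E₂ hval =>
        obtain ⟨hx, hV₀, hb⟩ := Expr.letE.inj h
        subst hx; subst hV₀
        obtain ⟨E₂', hE₂'⟩ := dem N E₂ x₀ L' M hb
        obtain ⟨Lv, Mv, hvA, hvB⟩ := hE₂' (.var x₀)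
        obtain ⟨hLv, hMv, -⟩ := tplugR_app_inj _ _ _ _ _ _ (hvA.symm.trans hb)
        rw [hLv, hMv] at hvB
        obtain ⟨LQ, MQ, hQA, hQB⟩ := hE₂' V₀
        refine Or.inl ⟨(x₀, V₀) :: LQ, MQ, by simp [tplugR, hQA], Or.inl ?_⟩
        refine ⟨.hole, _, _, Redex.deref x₀ V₀ E₂' hval, ?_, ?_⟩
        · simp [Ctx.plug, tplugR, hvB]
        · simp [Ctx.plug, tplugR, hQB]
      | assoc x₀ y₀ Q₀ A E₂ hA =>
        obtain ⟨hx, hQ, hb⟩ := Expr.letE.inj h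
        subst hx
        obtain ⟨E₂', hE₂'⟩ := dem N E₂ x₀ L' M hb
        obtain ⟨Lv, Mv, hvA, hvB⟩ := hE₂' (.var x₀)
        obtain ⟨hLv, hMv, -⟩ := tplugR_app_inj _ _ _ _ _ _ (hvA.symm.trans hb)
        rw [hLv, hMv] at hvB
        refine Or.inl ⟨(y₀, Q₀) :: (x₀, A) :: L', M, by simp [tplugR, hb], Or.inl ?_⟩
        refine ⟨.hole, _, _, Redex.assoc x₀ y₀ Q₀ A E₂' hA, ?_, ?_⟩
        · simp [Ctx.plug, tplugR, hvB, hQ]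
        · simp [Ctx.plug, tplugR, hvB]
  | appL E₁ N₁ ih =>
    intro r r' hred L M h
    cases L with
    | nil =>
      simp only [Ctx.plug, tplugR, Expr.app.injEq] at h
      obtain ⟨hM, hN⟩ := h
      subst hN
      refine Or.inl ⟨[], Ctx.plug E₁ r', by simp [Ctx.plug, tplugR], Or.inl ?_⟩
      exact ⟨E₁, r, r', hred, by simp [tplugR, hM], by simp [tplugR]⟩
    | cons p L' =>
      obtain ⟨x, Q⟩ := p
      exact absurd h (by simp [Ctx.plug, tplugR])
  | letB x Q E₁ ih =>
    intro r r' hred L M h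
    cases L with
    | nil => exact absurd h (by simp [Ctx.plug, tplugR])
    | cons p L' =>
      obtain ⟨x₀, Q₀⟩ := p
      simp only [Ctx.plug, tplugR, Expr.letE.injEq] at h
      obtain ⟨hx, hQ, hb⟩ := h
      subst hx; subst hQ
      rcases ih r r' hred L' M hb with ⟨L₁, M₁, h1, h2⟩ | hbr
      · refine Or.inl ⟨(x, Q) :: L₁, M₁, by simp [Ctx.plug, tplugR, h1], ?_⟩
        rcases h2 with hs | he
        · exact Or.inl (step_letB hs)
        · exact Or.inr (by simp [tplugR, he])
      · obtain ⟨Lb, xb, Nb, hb1, hb2⟩ := (betaRooted_iff _ _ _).1 hbr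
        refine Or.inr ((betaRooted_iff _ _ _).2 ⟨(x, Q) :: Lb, xb, Nb, ?_, ?_⟩)
        · simp [Ctx.plug, tplugR, hb1]
        · simp [Ctx.plug, tplugR, hb2]
  | letD x E₁ E₂ ih₁ ih₂ =>
    intro r r' hred L M h
    cases L with
    | nil => exact absurd h (by simp [Ctx.plug, tplugR])
    | cons p L' =>
      obtain ⟨x₀, Q₀⟩ := p
      simp only [Ctx.plug, tplugR, Expr.letE.injEq] at h
      obtain ⟨hx, hQ, hb⟩ := h
      subst hx
      obtain ⟨E₂', hE₂'⟩ := dem N E₂ x L' M hb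
      obtain ⟨Lv, Mv, hvA, hvB⟩ := hE₂' (.var x)
      obtain ⟨hLv, hMv, -⟩ := tplugR_app_inj _ _ _ _ _ _ (hvA.symm.trans hb)
      rw [hLv, hMv] at hvB
      refine Or.inl ⟨(x, Ctx.plug E₁ r') :: L', M, by simp [Ctx.plug, tplugR, hb], Or.inl ?_⟩
      refine ⟨.letD x E₁ E₂', r, r', hred, ?_, ?_⟩
      · simp [Ctx.plug, tplugR, hvB, hQ]
      · simp [Ctx.plug, tplugR, hvB]

lemma keyLemma (N V : Expr) : ∀ (n : ℕ) (L L' : List (ℕ × Expr)) (M : Expr),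
    StepNAvoid N n (tplugR L (.app M N)) (tplugR L' (.app V N)) →
    ∃ n' ≤ n, StepN n' (tplugR L M) (tplugR L' V) := by
  intro n
  induction n with
  | zero =>
    intro L L' M h
    obtain ⟨hL, hM, -⟩ := tplugR_app_inj _ _ _ _ _ _ h
    exact ⟨0, le_refl 0, by rw [hL, hM]; rfl⟩
  | succ n ih =>
    intro L L' M h
    obtain ⟨T, hstep, hnb, hrest⟩ := h
    obtain ⟨E, r, r', hred, heq, heq'⟩ := hstep
    rcases stepCase N E r r' hred L M heq.symm with ⟨L₁, M₁, h1, h2⟩ | hbr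
    · rw [heq', h1] at hrest
      obtain ⟨n', hn', hsn⟩ := ih L₁ L' M₁ hrest
      rcases h2 with hs | he
      · exact ⟨n' + 1, Nat.succ_le_succ hn', ⟨_, hs, hsn⟩⟩
      · exact ⟨n', le_trans hn' (Nat.le_succ n), by rw [he]; exact hsn⟩
    · exact absurd (by rw [heq, heq']; exact hbr) hnb

/-- Function-position reduction lemma for λ_let. -/
theorem red_app_lemma
    (Θ Θ' : LetNest) (M N V : Expr) (n : ℕ)
    (hprog : Closed (tplug Θ (.app M N))) (hV : IsValue V)
    (hred : StepNAvoid N n (tplug Θ (.app M N)) (tplug Θ' (.app V N))) :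
    ∃ n' ≤ n, StepN n' (tplug Θ M) (tplug Θ' V) := by
  rw [tplug_eq, tplug_eq] at hred
  obtain ⟨n', hn', hs⟩ := keyLemma N V n Θ.reverse Θ'.reverse M hred
  exact ⟨n', hn', by rw [tplug_eq, tplug_eq]; exact hs⟩
end
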